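/- Let k be an algebraically closed field of characteristic p > 0 and let h_1, h_2 be integers with 1 < h_1, h_2 < p. Then there exist distinct elements P_1, P_2 of k such that 1/((x − P_1)^{h_1}(x − P_2)^{h_2}) is exact if and only if h_1 + h_2 ≥ p + 2; moreover, when h_1 + h_2 ≥ p + 2 this rational function is exact for every choice of distinct P_1, P_2 in k. -/

import Mathlib

open Polynomial

/-- `HasDerivRF f g` means `g` is the formal derivative of the rational function `f` in `k(x)`:
if `f = u / v` with `v ≠ 0`, then `g = (u' v - u v') / v ^ 2`. -/
def HasDerivRF {k : Type*} [Field k] (f g : RatFunc k) : Prop :=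
  ∃ u v : Polynomial k, v ≠ 0 ∧
    f = algebraMap (Polynomial k) (RatFunc k) u / algebraMap (Polynomial k) (RatFunc k) v ∧
    g = algebraMap (Polynomial k) (RatFunc k)
          (Polynomial.derivative u * v - u * Polynomial.derivative v) /
        algebraMap (Polynomial k) (RatFunc k) (v ^ 2)

/-- A rational function is exact if it is the formal derivative of some rational function. -/
def IsExactRF {k : Type*} [Field k] (g : RatFunc k) : Prop := ∃ f : RatFunc k, HasDerivRF f g

lemma exists_antideriv {k : Type*} [Field k] (N : Polynomial k)
    (h : ∀ n ∈ N.support, (n + 1 : k) ≠ 0) : ∃ u : Polynomial k, derivative u = N := by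
  refine ⟨N.support.sum fun n => C (N.coeff n / (n + 1 : k)) * X ^ (n + 1), ?_⟩
  rw [map_sum]
  have key : ∀ n ∈ N.support,
      derivative (C (N.coeff n / (n + 1 : k)) * X ^ (n + 1)) = C (N.coeff n) * X ^ n := by
    intro n hn
    rw [derivative_C_mul_X_pow]
    have h1 : n + 1 - 1 = n := by omega
    rw [h1, Nat.cast_add, Nat.cast_one, div_mul_cancel₀ _ (h n hn)]
  rw [Finset.sum_congr rfl key]
  conv_rhs => rw [← N.sum_C_mul_X_pow_eq]
  rfl

lemma target_eq {k : Type*} [Field k] (h₁ h₂ : ℕ) (P₁ P₂ : k) :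
    (RatFunc.X - RatFunc.C P₁) ^ h₁ * (RatFunc.X - RatFunc.C P₂) ^ h₂ =
      algebraMap (Polynomial k) (RatFunc k) ((X - C P₁) ^ h₁ * (X - C P₂) ^ h₂) := by
  simp [map_mul, map_pow, map_sub, RatFunc.algebraMap_X, RatFunc.algebraMap_C]

lemma suff_core {k : Type*} [Field k] (p : ℕ) [CharP k p]
    (h₁ h₂ : ℕ) (hb₁ : h₁ < p) (hb₂ : h₂ < p) (hs : p + 2 ≤ h₁ + h₂) (P₁ P₂ : k) :
    IsExactRF (((RatFunc.X - RatFunc.C P₁) ^ h₁ * (RatFunc.X - RatFunc.C P₂) ^ h₂)⁻¹) := by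
  set A : Polynomial k := X - C P₁ with hA
  set B : Polynomial k := X - C P₂ with hB
  have hA0 : A ≠ 0 := X_sub_C_ne_zero P₁
  have hB0 : B ≠ 0 := X_sub_C_ne_zero P₂
  set N : Polynomial k := A ^ (p - h₁) * B ^ (p - h₂) with hN
  have hN0 : N ≠ 0 := mul_ne_zero (pow_ne_zero _ hA0) (pow_ne_zero _ hB0)
  have hdegN : N.natDegree ≤ p - 2 := by
    rw [hN, natDegree_mul (pow_ne_zero _ hA0) (pow_ne_zero _ hB0), natDegree_pow,
      natDegree_pow, hA, hB, natDegree_X_sub_C, natDegree_X_sub_C]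
    omega
  obtain ⟨u, hu⟩ : ∃ u : Polynomial k, derivative u = N := by
    apply exists_antideriv
    intro n hn hcast
    have hn' : n ≤ p - 2 := le_trans (le_natDegree_of_mem_supp n hn) hdegN
    have : p ∣ n + 1 := (CharP.cast_eq_zero_iff k p (n + 1)).mp (by exact_mod_cast hcast)
    have := Nat.le_of_dvd (by omega) this
    omega
  set v : Polynomial k := A ^ p * B ^ p with hv
  have hv0 : v ≠ 0 := mul_ne_zero (pow_ne_zero _ hA0) (pow_ne_zero _ hB0)
  have hpk : (C ((p : ℕ) : k) : Polynomial k) = 0 := by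
    rw [CharP.cast_eq_zero k p, map_zero]
  have hv' : derivative v = 0 := by
    rw [hv, derivative_mul, derivative_pow, derivative_pow, hpk]
    ring
  set M : Polynomial k := A ^ h₁ * B ^ h₂ with hM
  have hM0 : M ≠ 0 := mul_ne_zero (pow_ne_zero _ hA0) (pow_ne_zero _ hB0)
  have hvMN : v = M * N := by
    rw [hv, hM, hN]
    rw [mul_mul_mul_comm, ← pow_add, ← pow_add]
    congr 2 <;> omega
  set alg := algebraMap (Polynomial k) (RatFunc k) with halg
  have hinj : Function.Injective alg := RatFunc.algebraMap_injective k
  have hMne : alg M ≠ 0 := fun h => hM0 (hinj (by rw [h, map_zero]))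
  have hNne : alg N ≠ 0 := fun h => hN0 (hinj (by rw [h, map_zero]))
  have hvne : alg v ≠ 0 := fun h => hv0 (hinj (by rw [h, map_zero]))
  refine ⟨alg u / alg v, u, v, hv0, rfl, ?_⟩
  rw [target_eq, ← hM, ← halg]
  rw [hu, hv', mul_zero, sub_zero, pow_two, map_mul, map_mul, hvMN, map_mul]
  field_simp
  rw [show alg (A ^ h₁) * alg (B ^ h₂) = alg M from by rw [hM, map_mul],
      show alg (A ^ (p - h₁)) * alg (B ^ (p - h₂)) = alg N from by rw [hN, map_mul], map_mul, map_mul]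
  field_simp

lemma necc_core {k : Type*} [Field k] (p : ℕ) [CharP k p] (hp : p.Prime)
    (h₁ h₂ : ℕ) (h1a : 2 ≤ h₁) (h2a : 2 ≤ h₂) (hs : h₁ + h₂ ≤ p + 1)
    (c : k) (hc : c ≠ 0) (u v : Polynomial k) (hv : v ≠ 0)
    (E : v ^ 2 = (derivative u * v - u * derivative v) * (X ^ h₁ * (X - C c) ^ h₂)) :
    False := by
  have hXdvd : (X : Polynomial k) ∣ v := by
    refine prime_X.dvd_of_dvd_pow (n := 2) ?_
    rw [E]
    exact ((dvd_pow_self X (by omega : h₁ ≠ 0)).mul_right _).mul_left _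
  obtain ⟨w, hw, hXw⟩ := exists_eq_pow_rootMultiplicity_mul_and_not_dvd v hv 0
  rw [map_zero, sub_zero] at hw hXw
  have hm : 0 < v.rootMultiplicity 0 := by
    rw [rootMultiplicity_pos hv]
    unfold IsRoot
    rw [← coeff_zero_eq_eval_zero]
    exact X_dvd_iff.mp hXdvd
  obtain ⟨m', hm'⟩ : ∃ m', v.rootMultiplicity 0 = m' + 1 :=
    ⟨_, (Nat.succ_pred_eq_of_pos hm).symm⟩
  rw [hm'] at hw
  have hw0 : w ≠ 0 := by rintro rfl; rw [mul_zero] at hw; exact hv hw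
  set G : Polynomial k := X * (derivative u * w - u * derivative w)
      - C ((m' + 1 : ℕ) : k) * (u * w) with hG
  have hnum : derivative u * v - u * derivative v = X ^ m' * G := by
    rw [hw, hG, derivative_mul, derivative_X_pow]
    simp only [Nat.add_sub_cancel, pow_succ]
    ring
  have E1 : X ^ (2 * m' + 2) * w ^ 2 = X ^ (m' + h₁) * (G * (X - C c) ^ h₂) := by
    have e1 : (X ^ (m' + 1) * w : Polynomial k) ^ 2 = X ^ (2 * m' + 2) * w ^ 2 := by
      rw [mul_pow, ← pow_mul]; ring_nf
    calc X ^ (2 * m' + 2) * w ^ 2 = (X ^ (m' + 1) * w : Polynomial k) ^ 2 := e1.symm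
      _ = (derivative u * v - u * derivative v) * (X ^ h₁ * (X - C c) ^ h₂) := by rw [← hw]; exact E
      _ = X ^ m' * G * (X ^ h₁ * (X - C c) ^ h₂) := by rw [hnum]
      _ = X ^ (m' + h₁) * (G * (X - C c) ^ h₂) := by rw [pow_add]; ring
  have hXne : (X : Polynomial k) ≠ 0 := X_ne_zero
  have hle : h₁ ≤ m' + 2 := by
    by_contra hlt
    push_neg at hlt
    have hdvd : (X : Polynomial k) ^ (2 * m' + 3) ∣ X ^ (2 * m' + 2) * w ^ 2 := by
      rw [E1]; exact Dvd.dvd.mul_right (pow_dvd_pow X (by omega)) _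
    obtain ⟨t, ht⟩ := hdvd
    have hw2 : w ^ 2 = X * t := by
      refine mul_left_cancel₀ (pow_ne_zero (2 * m' + 2) hXne) ?_
      rw [ht, ← mul_assoc, ← pow_succ]
    exact hXw (prime_X.dvd_of_dvd_pow ⟨t, hw2⟩)
  have E2 : X ^ (m' + 2 - h₁) * w ^ 2 = G * (X - C c) ^ h₂ := by
    refine mul_left_cancel₀ (pow_ne_zero (m' + h₁) hXne) ?_
    rw [← mul_assoc, ← pow_add, show m' + h₁ + (m' + 2 - h₁) = 2 * m' + 2 from by omega, E1]
  -- pass to power series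
  have E3 : (PowerSeries.X : PowerSeries k) ^ (m' + 2 - h₁) * (w : PowerSeries k) ^ 2
      = (G : PowerSeries k) * (PowerSeries.X - PowerSeries.C c) ^ h₂ := by
    have h3 := congrArg (fun q : Polynomial k => (q : PowerSeries k)) E2
    simpa only [Polynomial.coe_mul, Polynomial.coe_pow, Polynomial.coe_sub,
      Polynomial.coe_X, Polynomial.coe_C] using h3
  set W : PowerSeries k := (w : PowerSeries k) with hWdef
  have hWc : PowerSeries.constantCoeff W ≠ 0 := by
    rw [hWdef, Polynomial.constantCoeff_coe]
    exact fun h => hXw (X_dvd_iff.mpr h)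
  have hWne : W ≠ 0 := fun h => hWc (by rw [h, map_zero])
  have hWi : W * W⁻¹ = 1 := PowerSeries.mul_inv_cancel _ hWc
  set U : PowerSeries k := (u : PowerSeries k) with hUdef
  set F : PowerSeries k := U * W⁻¹ with hFdef
  have hFW : F * W = U := by
    rw [hFdef, mul_assoc, PowerSeries.inv_mul_cancel _ hWc, mul_one]
  set D := (PowerSeries.derivative (R := k)) with hD
  have hder : D U * W - U * D W = D F * W ^ 2 := by
    have h1 : D U = D F * W + F * D W := by
      rw [← hFW, hD, Derivation.leibniz, smul_eq_mul, smul_eq_mul]; ring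
    rw [h1, ← hFW]; ring
  have EG : (G : PowerSeries k)
      = (PowerSeries.X * D F - PowerSeries.C ((m' + 1 : ℕ) : k) * F) * W ^ 2 := by
    have h4 : (G : PowerSeries k)
        = PowerSeries.X * (D U * W - U * D W)
          - PowerSeries.C ((m' + 1 : ℕ) : k) * (U * W) := by
      rw [hG]
      simp only [Polynomial.coe_sub, Polynomial.coe_mul, Polynomial.coe_X, Polynomial.coe_C]
      rw [hD, PowerSeries.derivative_coe, PowerSeries.derivative_coe, ← hUdef, ← hWdef]
    rw [h4, hder, ← hFW]; ring
  -- the explicit inverse of (X - C c) ^ h₂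
  set Sp : PowerSeries k := PowerSeries.C ((-c)⁻¹ ^ h₂)
      * PowerSeries.rescale c⁻¹ ((PowerSeries.invOneSubPow k h₂ : (PowerSeries k)ˣ) : PowerSeries k)
      with hSpdef
  have hBfac : (PowerSeries.X - PowerSeries.C c : PowerSeries k)
      = PowerSeries.C (-c) * (1 - PowerSeries.C c⁻¹ * PowerSeries.X) := by
    have hm1 : (PowerSeries.C (-1) : PowerSeries k) = -1 := by rw [map_neg, map_one]
    rw [mul_sub, mul_one, ← mul_assoc, ← map_mul, neg_mul, mul_inv_cancel₀ hc, hm1, map_neg]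
    ring
  have hresc : (1 - PowerSeries.C c⁻¹ * PowerSeries.X : PowerSeries k)
      = PowerSeries.rescale c⁻¹ (1 - PowerSeries.X) := by
    rw [map_sub, map_one, PowerSeries.rescale_X]
  have hSp : Sp * (PowerSeries.X - PowerSeries.C c) ^ h₂ = 1 := by
    rw [hSpdef, hBfac, mul_pow, ← map_pow, hresc, ← map_pow]
    rw [mul_mul_mul_comm, ← map_mul, ← map_mul]
    rw [← PowerSeries.invOneSubPow_inv_eq_one_sub_pow, Units.val_inv]
    rw [← mul_pow, inv_mul_cancel₀ (neg_ne_zero.mpr hc), one_pow, map_one, map_one, mul_one]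
  -- main identity in power series
  have hGval : (G : PowerSeries k) = PowerSeries.X ^ (m' + 2 - h₁) * Sp * W ^ 2 := by
    calc (G : PowerSeries k) = ↑G * (Sp * (PowerSeries.X - PowerSeries.C c) ^ h₂) := by
          rw [hSp, mul_one]
      _ = Sp * (↑G * (PowerSeries.X - PowerSeries.C c) ^ h₂) := by ring
      _ = Sp * (PowerSeries.X ^ (m' + 2 - h₁) * W ^ 2) := by rw [← E3]
      _ = PowerSeries.X ^ (m' + 2 - h₁) * Sp * W ^ 2 := by ring
  have key : PowerSeries.X * D F - PowerSeries.C ((m' + 1 : ℕ) : k) * F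
      = PowerSeries.X ^ (m' + 2 - h₁) * Sp :=
    mul_right_cancel₀ (pow_ne_zero 2 hWne) (by rw [← EG, hGval])
  have hrhs : PowerSeries.coeff (m' + 1) (PowerSeries.X ^ (m' + 2 - h₁) * Sp)
      = PowerSeries.coeff (h₁ - 1) Sp := by
    rw [show m' + 1 = (h₁ - 1) + (m' + 2 - h₁) from by omega, PowerSeries.coeff_X_pow_mul]
  have hcoeff := congrArg (PowerSeries.coeff (m' + 1)) key
  rw [map_sub, PowerSeries.coeff_succ_X_mul, PowerSeries.coeff_C_mul, hD,
    PowerSeries.coeff_derivative, hrhs] at hcoeff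
  have hzero : PowerSeries.coeff (h₁ - 1) Sp = 0 := by
    rw [← hcoeff]
    push_cast
    ring
  have hchoose : ((Nat.choose (h₂ - 1 + (h₁ - 1)) (h₂ - 1) : ℕ) : k) ≠ 0 := by
    intro h0
    have hdvd := (CharP.cast_eq_zero_iff k p _).mp h0
    have hle2 : h₂ - 1 ≤ h₂ - 1 + (h₁ - 1) := Nat.le_add_right _ _
    have hfact := Nat.choose_mul_factorial_mul_factorial hle2
    have hpf : p ∣ Nat.factorial (h₂ - 1 + (h₁ - 1)) := by
      rw [← hfact]; exact (hdvd.mul_right _).mul_right _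
    have := (Nat.Prime.dvd_factorial hp).mp hpf
    omega
  have hSpcoeff : PowerSeries.coeff (h₁ - 1) Sp ≠ 0 := by
    rw [hSpdef, PowerSeries.coeff_C_mul, PowerSeries.coeff_rescale,
      PowerSeries.invOneSubPow_val_eq_mk_sub_one_add_choose_of_pos k h₂ (by omega : 0 < h₂),
      PowerSeries.coeff_mk]
    exact mul_ne_zero (pow_ne_zero _ (inv_ne_zero (neg_ne_zero.mpr hc)))
      (mul_ne_zero (pow_ne_zero _ (inv_ne_zero hc)) hchoose)
  exact hSpcoeff hzero

lemma comp_translate_injective {k : Type*} [Field k] (a : k) (q : Polynomial k)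
    (hq : q.comp (X + C a) = 0) : q = 0 := by
  have h := congrArg (fun r : Polynomial k => r.comp (X - C a)) hq
  simp only [Polynomial.comp_assoc, zero_comp] at h
  have h2 : (X + C a).comp (X - C a) = (X : Polynomial k) := by
    simp [add_comp]
  rw [h2, comp_X] at h
  exact h

lemma deriv_comp_translate {k : Type*} [Field k] (a : k) (q : Polynomial k) :
    (derivative q).comp (X + C a) = derivative (q.comp (X + C a)) := by
  rw [derivative_comp]
  simp

lemma necc {k : Type*} [Field k] (p : ℕ) [CharP k p] (hp : p.Prime) (h₁ h₂ : ℕ)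
    (h1 : 1 < h₁) (h2 : 1 < h₂) (hlt : h₁ + h₂ ≤ p + 1)
    (P₁ P₂ : k) (hne : P₁ ≠ P₂)
    (hex : IsExactRF (((RatFunc.X - RatFunc.C P₁) ^ h₁ * (RatFunc.X - RatFunc.C P₂) ^ h₂)⁻¹)) :
    False := by
  obtain ⟨f, u, v, hv, hf, hg⟩ := hex
  rw [target_eq] at hg
  set alg := algebraMap (Polynomial k) (RatFunc k) with halg
  set M : Polynomial k := (X - C P₁) ^ h₁ * (X - C P₂) ^ h₂ with hM
  have hinj : Function.Injective alg := RatFunc.algebraMap_injective k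
  have hM0 : M ≠ 0 :=
    mul_ne_zero (pow_ne_zero _ (X_sub_C_ne_zero _)) (pow_ne_zero _ (X_sub_C_ne_zero _))
  have hMne : alg M ≠ 0 := fun h => hM0 (hinj (by rw [h, map_zero]))
  have hv2 : (v : Polynomial k) ^ 2 ≠ 0 := pow_ne_zero 2 hv
  have hvne : alg (v ^ 2) ≠ 0 := fun h => hv2 (hinj (by rw [h, map_zero]))
  have hvne' : alg v ≠ 0 := fun h => hv (hinj (by rw [h, map_zero]))
  have hE : v ^ 2 = (derivative u * v - u * derivative v) * M := by
    apply hinj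
    field_simp at hg
    simp only [map_mul, map_sub, map_pow] at hg ⊢
    linear_combination hg
  -- translate P₁ to 0
  have hEc := congrArg (fun q : Polynomial k => q.comp (X + C P₁)) hE
  simp only [hM, Polynomial.pow_comp, Polynomial.mul_comp, Polynomial.sub_comp,
    Polynomial.X_comp, Polynomial.C_comp, deriv_comp_translate] at hEc
  rw [show (X + C P₁ - C P₁ : Polynomial k) = X from by ring,
    show (X + C P₁ - C P₂ : Polynomial k) = X - C (P₂ - P₁) from by rw [map_sub]; ring] at hEc
  exact necc_core p hp h₁ h₂ (by omega) (by omega) hlt (P₂ - P₁)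
    (sub_ne_zero.mpr (Ne.symm hne)) (u.comp (X + C P₁)) (v.comp (X + C P₁))
    (fun h => hv (comp_translate_injective P₁ v h)) hEc

/-- For `1 < h₁, h₂ < p` over an algebraically closed field of characteristic `p`:
`1/((x - P₁)^{h₁} (x - P₂)^{h₂})` is exact for some distinct `P₁, P₂` iff `h₁ + h₂ ≥ p + 2`;
moreover, when `h₁ + h₂ ≥ p + 2` it is exact for every choice of distinct `P₁, P₂`. -/
theorem stmt1 {k : Type*} [Field k] [IsAlgClosed k] (p : ℕ) [CharP k p] (hp : 0 < p)
    (h₁ h₂ : ℕ) (hh₁ : 1 < h₁ ∧ h₁ < p) (hh₂ : 1 < h₂ ∧ h₂ < p) :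
    ((∃ P₁ P₂ : k, P₁ ≠ P₂ ∧
        IsExactRF (((RatFunc.X - RatFunc.C P₁) ^ h₁ * (RatFunc.X - RatFunc.C P₂) ^ h₂)⁻¹)) ↔
      p + 2 ≤ h₁ + h₂) ∧
    (p + 2 ≤ h₁ + h₂ → ∀ P₁ P₂ : k, P₁ ≠ P₂ →
      IsExactRF (((RatFunc.X - RatFunc.C P₁) ^ h₁ * (RatFunc.X - RatFunc.C P₂) ^ h₂)⁻¹)) := by
  have hprime : p.Prime := (CharP.char_is_prime_or_zero k p).resolve_right (by omega)
  refine ⟨⟨?_, ?_⟩, ?_⟩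
  · rintro ⟨P₁, P₂, hne, hex⟩
    by_contra hlt
    exact necc p hprime h₁ h₂ hh₁.1 hh₂.1 (by omega) P₁ P₂ hne hex
  · intro hs
    exact ⟨0, 1, zero_ne_one, suff_core p h₁ h₂ hh₁.2 hh₂.2 hs 0 1⟩
  · intro hs P₁ P₂ _
    exact suff_core p h₁ h₂ hh₁.2 hh₂.2 hs P₁ P₂
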